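/- Every λ-term typable in system F is strongly normalizable: if Γ ⊢_F t : A then every β-reduction sequence starting from t is finite. -/

import Mathlib

set_option maxHeartbeats 1000000


/-- Untyped λ-terms in de Bruijn representation. -/
inductive Trm : Type
  | var : ℕ → Trm
  | app : Trm → Trm → Trm
  | lam : Trm → Trm
  deriving DecidableEq

namespace Trm

/-- The set of free variables of a term (as de Bruijn indices). -/
def fv : Trm → Set ℕ
  | var n => {n}
  | app u v => fv u ∪ fv v
  | lam u => {n | n + 1 ∈ fv u}

/-- A term is closed if it has no free variables. -/
def Closed (t : Trm) : Prop := fv t = ∅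

/-- λI-terms: abstraction is allowed only on variables occurring free in the body. -/
inductive IsLI : Trm → Prop
  | var (n : ℕ) : IsLI (var n)
  | app {u v : Trm} : IsLI u → IsLI v → IsLI (app u v)
  | lam {u : Trm} : IsLI u → 0 ∈ fv u → IsLI (lam u)

/-- Lifting of free variables ≥ d. -/
def lift (d : ℕ) : Trm → Trm
  | var n => if n < d then var n else var (n + 1)
  | app u v => app (lift d u) (lift d v)
  | lam u => lam (lift (d + 1) u)

def liftTimes (k : ℕ) (t : Trm) : Trm := (lift 0)^[k] t

/-- Capture-avoiding substitution of the k-th free variable. -/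
def subst : Trm → ℕ → Trm → Trm
  | var n, k, v => if n < k then var n else if n = k then liftTimes k v else var (n - 1)
  | app a b, k, v => app (subst a k v) (subst b k v)
  | lam a, k, v => lam (subst a (k + 1) v)

end Trm

/-- One step of β-reduction. -/
inductive Beta : Trm → Trm → Prop
  | beta {u v : Trm} : Beta (.app (.lam u) v) (u.subst 0 v)
  | appL {u u' v : Trm} : Beta u u' → Beta (.app u v) (.app u' v)
  | appR {u v v' : Trm} : Beta v v' → Beta (.app u v) (.app u v')
  | lam {u u' : Trm} : Beta u u' → Beta (.lam u) (.lam u')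

/-- One step of η-reduction: λx (u)x → u when x ∉ Fv(u). -/
inductive Eta : Trm → Trm → Prop
  | eta (u : Trm) : Eta (.lam (.app (u.lift 0) (.var 0))) u
  | appL {u u' v : Trm} : Eta u u' → Eta (.app u v) (.app u' v)
  | appR {u v v' : Trm} : Eta v v' → Eta (.app u v) (.app u v')
  | lam {u u' : Trm} : Eta u u' → Eta (.lam u) (.lam u')

/-- β-reduction (reflexive-transitive closure). -/
def BetaStar : Trm → Trm → Prop := Relation.ReflTransGen Beta

/-- βη-reduction (reflexive-transitive closure of the union of β and η). -/
def BetaEtaStar : Trm → Trm → Prop := Relation.ReflTransGen (fun a b => Beta a b ∨ Eta a b)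

/-- η-reduction (reflexive-transitive closure). -/
def EtaStar : Trm → Trm → Prop := Relation.ReflTransGen Eta

/-- A term is β-normal iff it contains no β-redex. -/
def BetaNormal (t : Trm) : Prop := ∀ u, ¬ Beta t u

/-- A term is βη-normal iff it contains neither a β-redex nor an η-redex. -/
def BetaEtaNormal (t : Trm) : Prop := ∀ u, ¬ Beta t u ∧ ¬ Eta t u

/-- A term is strongly normalizable iff every β-reduction sequence from it is finite. -/
def StronglyNormalizable (t : Trm) : Prop :=
  ¬ ∃ f : ℕ → Trm, f 0 = t ∧ ∀ n, Beta (f n) (f (n + 1))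

/-- Types of system F in de Bruijn representation. -/
inductive Ty : Type
  | var : ℕ → Ty
  | arr : Ty → Ty → Ty
  | all : Ty → Ty
  deriving DecidableEq

namespace Ty

/-- Free type variables. -/
def tfv : Ty → Set ℕ
  | var n => {n}
  | arr A B => tfv A ∪ tfv B
  | all A => {n | n + 1 ∈ tfv A}

/-- Lifting of free type variables ≥ d. -/
def tlift (d : ℕ) : Ty → Ty
  | var n => if n < d then var n else var (n + 1)
  | arr A B => arr (tlift d A) (tlift d B)
  | all A => all (tlift (d + 1) A)

def tliftTimes (k : ℕ) (A : Ty) : Ty := (tlift 0)^[k] A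

/-- Substitution of the k-th free type variable. -/
def tsubst : Ty → ℕ → Ty → Ty
  | var n, k, G => if n < k then var n else if n = k then tliftTimes k G else var (n - 1)
  | arr A B, k, G => arr (tsubst A k G) (tsubst B k G)
  | all A, k, G => all (tsubst A (k + 1) G)

/-- Proper types: in every subtype ∀X E, the variable X occurs free in E. -/
def Proper : Ty → Prop
  | var _ => True
  | arr A B => Proper A ∧ Proper B
  | all A => Proper A ∧ 0 ∈ tfv A

/-- Closed types. -/
def ClosedTy (A : Ty) : Prop := tfv A = ∅

end Ty

/-- Typing judgments of system F (restricted to proper types: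
the rule (∀e) requires X free in A and instantiates at proper types only). -/
inductive Typing : List Ty → Trm → Ty → Prop
  | ax {Γ : List Ty} {n : ℕ} {A : Ty} :
      Γ[n]? = some A → (∀ B ∈ Γ, B.Proper) → Typing Γ (.var n) A
  | arrI {Γ : List Ty} {A B : Ty} {t : Trm} :
      A.Proper → Typing (A :: Γ) t B → Typing Γ (.lam t) (.arr A B)
  | arrE {Γ : List Ty} {A B : Ty} {u v : Trm} :
      Typing Γ u (.arr A B) → Typing Γ v A → Typing Γ (.app u v) B
  | allI {Γ : List Ty} {A : Ty} {t : Trm} :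
      0 ∈ Ty.tfv A → Typing (Γ.map (Ty.tlift 0)) t A → Typing Γ t (.all A)
  | allE {Γ : List Ty} {A : Ty} {t : Trm} (G : Ty) :
      G.Proper → 0 ∈ Ty.tfv A → Typing Γ t (.all A) → Typing Γ t (A.tsubst 0 G)

namespace SNProof

/-! ### Renamings and simultaneous substitutions -/

def upr (ξ : ℕ → ℕ) : ℕ → ℕ
  | 0 => 0
  | n+1 => ξ n + 1

def ren (ξ : ℕ → ℕ) : Trm → Trm
  | .var n => .var (ξ n)
  | .app u v => .app (ren ξ u) (ren ξ v)
  | .lam u => .lam (ren (upr ξ) u)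

def ups (σ : ℕ → Trm) : ℕ → Trm
  | 0 => .var 0
  | n+1 => ren Nat.succ (σ n)

def msub (σ : ℕ → Trm) : Trm → Trm
  | .var n => σ n
  | .app u v => .app (msub σ u) (msub σ v)
  | .lam u => .lam (msub (ups σ) u)

def scons (v : Trm) (σ : ℕ → Trm) : ℕ → Trm
  | 0 => v
  | n+1 => σ n

theorem ren_ext {ξ ζ : ℕ → ℕ} (t : Trm) (h : ∀ n, ξ n = ζ n) : ren ξ t = ren ζ t := by
  induction t generalizing ξ ζ with
  | var n => simp [ren, h]
  | app u v ihu ihv => simp [ren, ihu h, ihv h]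
  | lam u ih =>
    simp only [ren, Trm.lam.injEq]
    exact ih (fun n => by cases n <;> simp [upr, h])

theorem msub_ext {σ τ : ℕ → Trm} (t : Trm) (h : ∀ n, σ n = τ n) : msub σ t = msub τ t := by
  induction t generalizing σ τ with
  | var n => simp [msub, h]
  | app u v ihu ihv => simp [msub, ihu h, ihv h]
  | lam u ih =>
    simp only [msub, Trm.lam.injEq]
    exact ih (fun n => by cases n <;> simp [ups, h])

theorem ren_ren (ξ ζ : ℕ → ℕ) (t : Trm) : ren ξ (ren ζ t) = ren (fun n => ξ (ζ n)) t := by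
  induction t generalizing ξ ζ with
  | var n => rfl
  | app u v ihu ihv => simp [ren, ihu, ihv]
  | lam u ih =>
    simp only [ren, Trm.lam.injEq]
    rw [ih]
    exact ren_ext u (fun n => by cases n <;> simp [upr])

theorem msub_ren (σ : ℕ → Trm) (ξ : ℕ → ℕ) (t : Trm) :
    msub σ (ren ξ t) = msub (fun n => σ (ξ n)) t := by
  induction t generalizing σ ξ with
  | var n => rfl
  | app u v ihu ihv => simp [ren, msub, ihu, ihv]
  | lam u ih =>
    simp only [ren, msub, Trm.lam.injEq]
    rw [ih]
    exact msub_ext u (fun n => by cases n <;> simp [ups, upr])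

theorem ren_msub (ξ : ℕ → ℕ) (σ : ℕ → Trm) (t : Trm) :
    ren ξ (msub σ t) = msub (fun n => ren ξ (σ n)) t := by
  induction t generalizing σ ξ with
  | var n => rfl
  | app u v ihu ihv => simp [ren, msub, ihu, ihv]
  | lam u ih =>
    simp only [ren, msub, Trm.lam.injEq]
    rw [ih]
    refine msub_ext u (fun n => ?_)
    cases n with
    | zero => rfl
    | succ n =>
      simp only [ups, ren_ren]
      exact ren_ext (σ n) (fun m => by simp [upr])

theorem msub_msub (σ τ : ℕ → Trm) (t : Trm) :
    msub σ (msub τ t) = msub (fun n => msub σ (τ n)) t := by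
  induction t generalizing σ τ with
  | var n => rfl
  | app u v ihu ihv => simp [msub, ihu, ihv]
  | lam u ih =>
    simp only [msub, Trm.lam.injEq]
    rw [ih]
    refine msub_ext u (fun n => ?_)
    cases n with
    | zero => rfl
    | succ n =>
      simp only [ups, msub_ren, ren_msub]

theorem ren_id (t : Trm) : ren (fun n => n) t = t := by
  induction t with
  | var n => rfl
  | app u v ihu ihv => simp [ren, ihu, ihv]
  | lam u ih =>
    simp only [ren, Trm.lam.injEq]
    rw [ren_ext u (ζ := fun n => n) (fun n => by cases n <;> simp [upr])]
    exact ih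

theorem msub_id (t : Trm) : msub (fun n => .var n) t = t := by
  induction t with
  | var n => rfl
  | app u v ihu ihv => simp [msub, ihu, ihv]
  | lam u ih =>
    simp only [msub, Trm.lam.injEq]
    rw [msub_ext u (τ := fun n => .var n) (fun n => by cases n <;> simp [ups, ren])]
    exact ih

/-! ### Relating the given `lift`/`subst` to renaming/substitution -/

theorem lift_eq_ren (d : ℕ) (t : Trm) :
    Trm.lift d t = ren (fun n => if n < d then n else n + 1) t := by
  induction t generalizing d with
  | var n => simp only [Trm.lift, ren]; split <;> rfl
  | app u v ihu ihv => simp [Trm.lift, ren, ihu, ihv]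
  | lam u ih =>
    simp only [Trm.lift, ren, Trm.lam.injEq]
    rw [ih]
    refine ren_ext u (fun n => ?_)
    cases n with
    | zero => simp [upr]
    | succ n => simp only [upr]; split <;> split <;> omega

theorem liftTimes_eq_ren (k : ℕ) (t : Trm) :
    Trm.liftTimes k t = ren (fun n => n + k) t := by
  induction k with
  | zero => exact (ren_id t).symm
  | succ k ih =>
    show (Trm.lift 0)^[k+1] t = _
    rw [Function.iterate_succ_apply']
    show Trm.lift 0 (Trm.liftTimes k t) = _
    rw [ih, lift_eq_ren, ren_ren]
    exact ren_ext t (fun n => by rw [if_neg (Nat.not_lt_zero _)]; omega)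

theorem subst_eq_msub (t : Trm) (k : ℕ) (v : Trm) :
    Trm.subst t k v =
      msub (fun n => if n < k then .var n else if n = k then ren (fun m => m + k) v
        else .var (n - 1)) t := by
  induction t generalizing k with
  | var n =>
    simp only [Trm.subst, msub, liftTimes_eq_ren]
  | app u w ihu ihw => simp [Trm.subst, msub, ihu, ihw]
  | lam u ih =>
    simp only [Trm.subst, msub, Trm.lam.injEq]
    rw [ih]
    refine msub_ext u (fun n => ?_)
    cases n with
    | zero => simp [ups]
    | succ n =>
      simp only [ups]
      rcases Nat.lt_trichotomy n k with h | h | h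
      · rw [if_pos h, if_pos (by omega : n + 1 < k + 1)]
        rfl
      · subst h
        rw [if_neg (by omega), if_pos rfl, if_neg (by omega), if_pos rfl, ren_ren]
        exact ren_ext v (fun m => by omega)
      · rw [if_neg (by omega), if_neg (by omega), if_neg (by omega), if_neg (by omega)]
        simp only [ren]
        congr 1
        omega

theorem subst_zero (t v : Trm) :
    Trm.subst t 0 v = msub (scons v (fun n => .var n)) t := by
  rw [subst_eq_msub]
  refine msub_ext t (fun n => ?_)
  cases n with
  | zero => simp [scons, ren_id]
  | succ n => simp [scons]

theorem subst_msub_up (σ : ℕ → Trm) (v t : Trm) :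
    Trm.subst (msub (ups σ) t) 0 v = msub (scons v σ) t := by
  rw [subst_zero, msub_msub]
  refine msub_ext t (fun n => ?_)
  cases n with
  | zero => rfl
  | succ n =>
    show msub _ (ren Nat.succ (σ n)) = σ n
    rw [msub_ren]
    exact msub_id (σ n)

theorem beta_msub {t t' : Trm} (h : Beta t t') (σ : ℕ → Trm) :
    Beta (msub σ t) (msub σ t') := by
  induction h generalizing σ with
  | @beta u v =>
    have e : msub σ (Trm.subst u 0 v) = Trm.subst (msub (ups σ) u) 0 (msub σ v) := by
      rw [subst_zero, msub_msub, subst_msub_up]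
      refine msub_ext u (fun n => ?_)
      cases n <;> rfl
    show Beta (.app (.lam (msub (ups σ) u)) (msub σ v)) _
    rw [e]
    exact Beta.beta
  | appL _ ih => exact Beta.appL (ih σ)
  | appR _ ih => exact Beta.appR (ih σ)
  | lam _ ih => exact Beta.lam (ih (ups σ))

theorem beta_subst {a a' : Trm} (h : Beta a a') (v : Trm) :
    Beta (Trm.subst a 0 v) (Trm.subst a' 0 v) := by
  rw [subst_zero, subst_zero]
  exact beta_msub h _

/-! ### Strong normalization as accessibility -/

def SN (t : Trm) : Prop := Acc (fun a b => Beta b a) t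

theorem sn_of_image {g : Trm → Trm} (hg : ∀ a b, Beta a b → Beta (g a) (g b)) :
    ∀ {a : Trm}, SN (g a) → SN a := by
  intro a h
  generalize e : g a = w at h
  induction h generalizing a with
  | intro w _ ih =>
    subst e
    exact ⟨_, fun b hb => ih _ (hg _ _ hb) rfl⟩

theorem sn_app_left {t u : Trm} (h : SN (.app t u)) : SN t :=
  sn_of_image (g := fun a => .app a u) (fun _ _ hb => Beta.appL hb) h

theorem sn_of_subst {a v : Trm} (h : SN (Trm.subst a 0 v)) : SN a :=
  sn_of_image (g := fun a => Trm.subst a 0 v) (fun _ _ hb => beta_subst hb v) h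

theorem no_beta_var (n : ℕ) (u : Trm) : ¬ Beta (.var n) u := by
  intro h; cases h

/-! ### Reducibility candidates -/

def Neu : Trm → Prop
  | .lam _ => False
  | _ => True

structure CR (X : Set Trm) : Prop where
  cr1 : ∀ t ∈ X, SN t
  cr2 : ∀ t ∈ X, ∀ t', Beta t t' → t' ∈ X
  cr3 : ∀ t, Neu t → (∀ t', Beta t t' → t' ∈ X) → t ∈ X

theorem var_mem {X : Set Trm} (hX : CR X) (n : ℕ) : Trm.var n ∈ X :=
  hX.cr3 _ trivial (fun u hu => absurd hu (no_beta_var n u))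

theorem CR_SN : CR {t | SN t} where
  cr1 := fun _ h => h
  cr2 := fun _ h t' hb => h.inv hb
  cr3 := fun t _ h => ⟨t, fun u hu => h u hu⟩

theorem lam_aux {X Y : Set Trm} (hX : CR X) (hY : CR Y) :
    ∀ a : Trm, SN a → ∀ u : Trm, SN u →
      (∀ v ∈ X, Trm.subst a 0 v ∈ Y) → u ∈ X → Trm.app (.lam a) u ∈ Y := by
  intro a sna
  induction sna with
  | intro a _ iha =>
    intro u snu
    induction snu with
    | intro u hu2 ihu =>
      intro h hu
      refine hY.cr3 _ trivial (fun t' hb => ?_)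
      cases hb with
      | beta => exact h _ hu
      | appL hl =>
        cases hl with
        | lam ha' =>
          exact iha _ ha' u ⟨u, hu2⟩
            (fun v hv => hY.cr2 _ (h v hv) _ (beta_subst ha' v)) hu
      | appR hr => exact ihu _ hr (fun v hv => h v hv) (hX.cr2 _ hu _ hr)

theorem lam_sound {X Y : Set Trm} (hX : CR X) (hY : CR Y) (a : Trm)
    (h : ∀ v ∈ X, Trm.subst a 0 v ∈ Y) : ∀ u ∈ X, Trm.app (.lam a) u ∈ Y := by
  have sna : SN a :=
    sn_of_subst (hY.cr1 _ (h (.var 0) (var_mem hX 0)))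
  exact fun u hu => lam_aux hX hY a sna u (hX.cr1 u hu) h hu

/-! ### Interpretation of types -/

def tcons (X : Set Trm) (ρ : ℕ → Set Trm) : ℕ → Set Trm
  | 0 => X
  | n+1 => ρ n

def tyDen : Ty → (ℕ → Set Trm) → Set Trm
  | .var n, ρ => ρ n
  | .arr A B, ρ => {t | ∀ u ∈ tyDen A ρ, Trm.app t u ∈ tyDen B ρ}
  | .all A, ρ => {t | ∀ X : Set Trm, CR X → t ∈ tyDen A (tcons X ρ)}

theorem CR_tyDen (A : Ty) : ∀ {ρ : ℕ → Set Trm}, (∀ n, CR (ρ n)) → CR (tyDen A ρ) := by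
  induction A with
  | var n => intro ρ hρ; exact hρ n
  | arr A B ihA ihB =>
    intro ρ hρ
    refine ⟨?_, ?_, ?_⟩
    · intro t ht
      have h0 : Trm.app t (.var 0) ∈ tyDen B ρ := ht _ (var_mem (ihA hρ) 0)
      exact sn_app_left ((ihB hρ).cr1 _ h0)
    · intro t ht t' hb u hu
      exact (ihB hρ).cr2 _ (ht u hu) _ (Beta.appL hb)
    · intro t hne ht u hu
      have snu : SN u := (ihA hρ).cr1 u hu
      revert hu
      induction snu with
      | intro u hu2 ihu =>
        intro hu
        refine (ihB hρ).cr3 _ trivial (fun t' hb => ?_)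
        cases hb with
        | beta => cases hne
        | appL hl => exact ht _ hl u hu
        | appR hr => exact ihu _ hr ((ihA hρ).cr2 _ hu _ hr)
  | all A ih =>
    intro ρ hρ
    have hcons : ∀ (X : Set Trm), CR X → ∀ n, CR (tcons X ρ n) := by
      intro X hX n; cases n with
      | zero => exact hX
      | succ n => exact hρ n
    refine ⟨?_, ?_, ?_⟩
    · intro t ht
      exact (ih (hcons _ CR_SN)).cr1 _ (ht _ CR_SN)
    · intro t ht t' hb X hX
      exact (ih (hcons X hX)).cr2 _ (ht X hX) _ hb
    · intro t hne ht X hX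
      exact (ih (hcons X hX)).cr3 _ hne (fun t' hb => ht _ hb X hX)

theorem tyDen_tlift (A : Ty) : ∀ (d : ℕ) (ρ : ℕ → Set Trm),
    tyDen (Ty.tlift d A) ρ = tyDen A (fun n => ρ (if n < d then n else n + 1)) := by
  induction A with
  | var n =>
    intro d ρ
    show tyDen (if n < d then Ty.var n else Ty.var (n + 1)) ρ = _
    by_cases h : n < d
    · rw [if_pos h]
      show ρ n = ρ (if n < d then n else n + 1)
      rw [if_pos h]
    · rw [if_neg h]
      show ρ (n + 1) = ρ (if n < d then n else n + 1)
      rw [if_neg h]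
  | arr A B ihA ihB =>
    intro d ρ
    show tyDen (.arr _ _) ρ = _
    simp only [tyDen, ihA, ihB]
  | all A ih =>
    intro d ρ
    show tyDen (.all _) ρ = _
    simp only [tyDen, ih]
    ext t
    refine forall_congr' (fun X => forall_congr' (fun hX => ?_))
    have e : (fun n => tcons X ρ (if n < d + 1 then n else n + 1)) =
        tcons X (fun n => ρ (if n < d then n else n + 1)) := by
      funext n
      cases n with
      | zero =>
        rw [if_pos (by omega : (0:ℕ) < d + 1)]
        rfl
      | succ n =>
        by_cases h : n < d
        · rw [if_pos (by omega : n + 1 < d + 1)]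
          show ρ n = ρ (if n < d then n else n + 1)
          rw [if_pos h]
        · rw [if_neg (by omega : ¬ n + 1 < d + 1)]
          show ρ (n + 1) = ρ (if n < d then n else n + 1)
          rw [if_neg h]
    rw [e]

theorem tyDen_tliftTimes (A : Ty) (k : ℕ) (ρ : ℕ → Set Trm) :
    tyDen (Ty.tliftTimes k A) ρ = tyDen A (fun n => ρ (n + k)) := by
  induction k generalizing ρ with
  | zero => rfl
  | succ k ih =>
    show tyDen ((Ty.tlift 0)^[k+1] A) ρ = _
    rw [Function.iterate_succ_apply']
    show tyDen (Ty.tlift 0 (Ty.tliftTimes k A)) ρ = _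
    rw [tyDen_tlift]
    have e1 : (fun n => ρ (if n < 0 then n else n + 1)) = fun n => ρ (n + 1) := by
      funext n; rw [if_neg (Nat.not_lt_zero n)]
    rw [e1, ih]
    refine congrArg (tyDen A) ?_
    funext n
    show ρ (n + k + 1) = ρ (n + (k + 1))
    congr 1

theorem tyDen_tsubst (A : Ty) : ∀ (k : ℕ) (G : Ty) (ρ : ℕ → Set Trm),
    tyDen (Ty.tsubst A k G) ρ =
      tyDen A (fun n => if n < k then ρ n else if n = k then tyDen G (fun m => ρ (m + k))
        else ρ (n - 1)) := by
  induction A with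
  | var n =>
    intro k G ρ
    show tyDen (if n < k then Ty.var n else if n = k then Ty.tliftTimes k G else Ty.var (n - 1)) ρ =
      (if n < k then ρ n else if n = k then tyDen G (fun m => ρ (m + k)) else ρ (n - 1))
    split
    · rfl
    · split
      · exact tyDen_tliftTimes G k ρ
      · rfl
  | arr A B ihA ihB =>
    intro k G ρ
    show tyDen (.arr _ _) ρ = _
    simp only [tyDen, ihA, ihB]
  | all A ih =>
    intro k G ρ
    show tyDen (.all _) ρ = _
    simp only [tyDen, ih]
    ext t
    refine forall_congr' (fun X => forall_congr' (fun hX => ?_))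
    have e : (fun n => if n < k + 1 then tcons X ρ n else if n = k + 1 then
          tyDen G (fun m => tcons X ρ (m + (k + 1))) else tcons X ρ (n - 1)) =
        tcons X (fun n => if n < k then ρ n else if n = k then tyDen G (fun m => ρ (m + k))
          else ρ (n - 1)) := by
      funext n
      cases n with
      | zero => rw [if_pos (by omega : 0 < k + 1)]; rfl
      | succ n =>
        show _ = (if n < k then ρ n else if n = k then tyDen G (fun m => ρ (m + k))
          else ρ (n - 1))
        rcases Nat.lt_trichotomy n k with h | h | h
        · rw [if_pos (by omega : n + 1 < k + 1), if_pos h]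
          rfl
        · subst h
          rw [if_neg (by omega), if_pos rfl, if_neg (by omega), if_pos rfl]
          rfl
        · rw [if_neg (by omega), if_neg (by omega), if_neg (by omega), if_neg (by omega)]
          obtain ⟨m, rfl⟩ : ∃ m, n = m + 1 := ⟨n - 1, by omega⟩
          show ρ m = ρ (m + 1 - 1)
          rfl
    rw [e]

theorem tyDen_tsubst_zero (A G : Ty) (ρ : ℕ → Set Trm) :
    tyDen (Ty.tsubst A 0 G) ρ = tyDen A (tcons (tyDen G ρ) ρ) := by
  rw [tyDen_tsubst]
  refine congrArg (tyDen A) ?_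
  funext n
  cases n with
  | zero => rfl
  | succ n =>
    rw [if_neg (by omega : ¬ n + 1 < 0), if_neg (by omega : ¬ n + 1 = 0)]
    rfl

/-! ### Adequacy -/

theorem adequacy {Γ : List Ty} {t : Trm} {A : Ty} (h : Typing Γ t A) :
    ∀ (ρ : ℕ → Set Trm), (∀ n, CR (ρ n)) →
    ∀ (σ : ℕ → Trm), (∀ n B, Γ[n]? = some B → σ n ∈ tyDen B ρ) →
    msub σ t ∈ tyDen A ρ := by
  induction h with
  | ax h1 _ =>
    intro ρ hρ σ hσ
    exact hσ _ _ h1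
  | @arrI Γ A B t _ _ ih =>
    intro ρ hρ σ hσ
    show Trm.lam (msub (ups σ) t) ∈ tyDen (.arr A B) ρ
    intro u hu
    refine lam_sound (CR_tyDen A hρ) (CR_tyDen B hρ) _ (fun v hv => ?_) u hu
    rw [subst_msub_up]
    refine ih ρ hρ (scons v σ) (fun n C hC => ?_)
    cases n with
    | zero =>
      simp only [List.getElem?_cons_zero, Option.some.injEq] at hC
      subst hC
      exact hv
    | succ n =>
      simp only [List.getElem?_cons_succ] at hC
      exact hσ n C hC
  | arrE _ _ ihu ihv =>
    intro ρ hρ σ hσ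
    exact ihu ρ hρ σ hσ _ (ihv ρ hρ σ hσ)
  | @allI Γ A t _ _ ih =>
    intro ρ hρ σ hσ
    intro X hX
    have hρ' : ∀ n, CR (tcons X ρ n) := by
      intro n; cases n with
      | zero => exact hX
      | succ n => exact hρ n
    refine ih (tcons X ρ) hρ' σ (fun n B hB => ?_)
    rw [List.getElem?_map] at hB
    cases hΓ : Γ[n]? with
    | none => rw [hΓ] at hB; cases hB
    | some C =>
      rw [hΓ] at hB
      simp only [Option.map_some, Option.some.injEq] at hB
      subst hB
      rw [tyDen_tlift]
      have e : (fun m => tcons X ρ (if m < 0 then m else m + 1)) = ρ := by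
        funext m; rw [if_neg (Nat.not_lt_zero m)]; rfl
      rw [e]
      exact hσ n C hΓ
  | @allE Γ A t G hG _ _ ih =>
    intro ρ hρ σ hσ
    rw [tyDen_tsubst_zero]
    exact ih ρ hρ σ hσ _ (CR_tyDen G hρ)

theorem typable_sn {Γ : List Ty} {t : Trm} {A : Ty} (h : Typing Γ t A) : SN t := by
  have hρ : ∀ n : ℕ, CR ((fun _ : ℕ => {t : Trm | SN t}) n) := fun _ => CR_SN
  have := adequacy h _ hρ (fun n => .var n)
    (fun n B _ => var_mem (CR_tyDen B hρ) n)
  rw [msub_id] at this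
  exact (CR_tyDen A hρ).cr1 _ this

theorem sn_strong {t : Trm} (h : SN t) : StronglyNormalizable t := by
  induction h with
  | intro t _ ih =>
    rintro ⟨f, h0, hf⟩
    exact ih (f 1) (h0 ▸ hf 0) ⟨fun n => f (n + 1), rfl, fun n => hf (n + 1)⟩

end SNProof

/-- every λ-term typable in system F is strongly normalizable. -/
theorem stmt4 (Γ : List Ty) (t : Trm) (A : Ty) (h : Typing Γ t A) :
    StronglyNormalizable t := by
  exact SNProof.sn_strong (SNProof.typable_sn h)
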